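/- Let φ: (A_p) → R_n be a flat local morphism of Noetherian local rings with A a PID and p = n ∩ A. If the fiber ring R_n ⊗_{A_p} k(p) is reduced, then R_n is reduced. -/
import Mathlib


set_option synthInstance.maxHeartbeats 1000000
set_option maxHeartbeats 1000000

open scoped TensorProduct

/-- Let `A` be a PID, `R` a Noetherian `A`-algebra, `n` a prime of `R` lying over `p`, and
assume the induced local morphism `A_p → R_n` is flat. If the fiber `R_n ⊗_{A_p} k(p)`
(realized as `R_n / p R_n`) is reduced, then `R_n` is reduced. -/
theorem stmt10 (A R : Type*) [CommRing A] [IsDomain A] [IsPrincipalIdealRing A]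
    [CommRing R] [IsNoetherianRing R] [Algebra A R]
    (n : Ideal R) [n.IsPrime] (p : Ideal A) [p.IsPrime]
    (hp : p = n.comap (algebraMap A R))
    (hflat :
      let _ : Algebra (Localization.AtPrime p) (Localization.AtPrime n) :=
        (Localization.localRingHom p n (algebraMap A R) hp).toAlgebra
      Module.Flat (Localization.AtPrime p) (Localization.AtPrime n))
    (hred : IsReduced ((Localization.AtPrime n) ⧸
      Ideal.map ((algebraMap R (Localization.AtPrime n)).comp (algebraMap A R)) p)) :
    IsReduced (Localization.AtPrime n) := by
  set Rn := Localization.AtPrime n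
  set Ap := Localization.AtPrime p
  letI : Algebra Ap Rn := (Localization.localRingHom p n (algebraMap A R) hp).toAlgebra
  haveI hF : Module.Flat Ap Rn := hflat
  rcases eq_or_ne p ⊥ with hbot | hbot
  · -- p = ⊥ : the fiber is `Rn` itself.
    subst hbot
    rw [Ideal.map_bot] at hred
    have hinj : Function.Injective (Ideal.Quotient.mk (⊥ : Ideal Rn)) := by
      rw [RingHom.injective_iff_ker_eq_bot, Ideal.mk_ker]
    exact isReduced_of_injective (Ideal.Quotient.mk (⊥ : Ideal Rn)) hinj
  · -- p ≠ ⊥ : A_p is a DVR with uniformizer the image of a generator of p.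
    obtain ⟨a, ha⟩ : p.IsPrincipal := IsPrincipalIdealRing.principal p
    have ha0 : a ≠ 0 := by
      rintro rfl
      exact hbot (by simp [ha])
    set t : Rn := algebraMap R Rn (algebraMap A R a) with ht_def
    -- the map of `p` is the principal ideal generated by `t`
    have hmap : Ideal.map ((algebraMap R Rn).comp (algebraMap A R)) p = Ideal.span {t} := by
      rw [ha]
      show Ideal.map _ (Ideal.span {a}) = _
      rw [Ideal.map_span, Set.image_singleton]
      rfl
    -- `t` is a nonzerodivisor in `Rn`, by flatness
    have hπ0 : algebraMap A Ap a ≠ 0 := fun h =>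
      ha0 (IsLocalization.injective Ap p.primeCompl_le_nonZeroDivisors (by simpa using h))
    have hregAp : IsSMulRegular Ap (algebraMap A Ap a) :=
      fun x y h => mul_left_cancel₀ hπ0 h
    have hregRn : IsSMulRegular Rn (algebraMap A Ap a) := by
      have h1 : IsSMulRegular (Ap ⊗[Ap] Rn) (algebraMap A Ap a) := hregAp.rTensor Rn
      exact (TensorProduct.lid Ap Rn).isSMulRegular_congr (algebraMap A Ap a) |>.mp h1
    have hsmul : ∀ x : Rn, (algebraMap A Ap a) • x = t * x := by
      intro x
      rw [Algebra.smul_def]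
      congr 1
      show Localization.localRingHom p n (algebraMap A R) hp (algebraMap A Ap a) = t
      rw [Localization.localRingHom_to_map]
    have ht : ∀ x : Rn, t * x = 0 → x = 0 := by
      intro x hx
      apply hregRn
      show (algebraMap A Ap a) • x = (algebraMap A Ap a) • (0 : Rn)
      rw [hsmul, hsmul, hx, mul_zero]
    have htk : ∀ (k : ℕ) (x : Rn), t ^ k * x = 0 → x = 0 := by
      intro k
      induction k with
      | zero => intro x hx; simpa using hx
      | succ m ih =>
        intro x hx
        exact ih x (ht _ (by rw [← hx, pow_succ]; ring))
    -- `t` lies in the maximal ideal of `Rn`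
    haveI : IsLocalRing Rn := Localization.AtPrime.isLocalRing n
    have htm : t ∈ IsLocalRing.maximalIdeal Rn := by
      rw [ht_def]
      refine (IsLocalization.AtPrime.to_map_mem_maximal_iff Rn n _ _).mpr ?_
      have : a ∈ p := ha ▸ Ideal.subset_span rfl
      rw [hp] at this
      exact this
    -- Nakayama: the nilradical is contained in `m • nilradical`
    haveI : IsNoetherianRing Rn :=
      IsLocalization.isNoetherianRing n.primeCompl Rn inferInstance
    have hle : nilradical Rn ≤ (IsLocalRing.maximalIdeal Rn) • (nilradical Rn) := by
      intro x hx
      obtain ⟨k, hk⟩ := hx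
      -- `x` maps to a nilpotent element of the fiber, which is reduced
      have hxq : (Ideal.Quotient.mk
          (Ideal.map ((algebraMap R Rn).comp (algebraMap A R)) p)) x = 0 := by
        apply IsReduced.eq_zero _ ⟨k, ?_⟩
        rw [← map_pow, hk, map_zero]
      rw [Ideal.Quotient.eq_zero_iff_mem, hmap, Ideal.mem_span_singleton] at hxq
      obtain ⟨y, rfl⟩ := hxq
      have hy : y ∈ nilradical Rn := by
        rw [mul_pow] at hk
        exact mem_nilradical.mpr ⟨k, htk k (y ^ k) hk⟩
      rw [Ideal.smul_eq_mul]
      exact Ideal.mul_mem_mul htm hy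
    have hN : nilradical Rn = ⊥ :=
      Submodule.eq_bot_of_le_smul_of_le_jacobson_bot (IsLocalRing.maximalIdeal Rn)
        (nilradical Rn) (IsNoetherian.noetherian _) hle
        (IsLocalRing.maximalIdeal_le_jacobson ⊥)
    refine ⟨fun x hx => ?_⟩
    have : x ∈ nilradical Rn := hx
    rw [hN] at this
    exact this
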